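/- Let φ be a diffuse submeasure on a Boolean algebra 𝒜 that is neither hyperbolic nor elliptic (i.e., h_φ is bounded). Then the function f(ξ) := ξ·h_φ(ξ) satisfies the superadditivity-type inequality f(ξ + ζ) ≥ f(ξ) + f(ζ) − f(ξ)·f(ζ) for all ξ, ζ > 0, and consequently lim_{ξ→0⁺} h_φ(ξ) exists and is finite. -/

import Mathlib

/-- The "atom" of the subalgebra generated by the finite sequence `C`,
corresponding to a choice `s` of sides. -/
def atomOf {α : Type*} [BooleanAlgebra α] {m : ℕ} (C : Fin m → α) (s : Fin m → Bool) : α :=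
  Finset.univ.inf (fun i => if s i then C i else (C i)ᶜ)

/-- The covering multiplicity of a finite sequence in a Boolean algebra: the largest `k`
such that every nonzero atom of the generated subalgebra lies below at least `k` of the `C i`. -/
noncomputable def covMult {α : Type*} [BooleanAlgebra α] {m : ℕ} (C : Fin m → α) : ℕ :=
  sSup {k : ℕ | ∀ s : Fin m → Bool, atomOf C s ≠ ⊥ →
    k ≤ (Finset.univ.filter (fun i => s i = true)).card}

/-- Kelley's covering number of a family `ℬ` in a Boolean algebra. -/
noncomputable def covNumber {α : Type*} [BooleanAlgebra α] (ℬ : Set α) : ℝ :=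
  sSup { r : ℝ | ∃ n : ℕ, 0 < n ∧ ∃ C : Fin n → α,
    (∀ i, C i ∈ ℬ) ∧ r = (covMult C : ℝ) / n }

/-- The function `h_φ` associated with a submeasure `φ`. -/
noncomputable def hphi {α : Type*} [BooleanAlgebra α] (φ : α → ℝ) (ξ : ℝ) : ℝ :=
  covNumber {A : α | φ A ≤ ξ} / ξ

/-- A submeasure on a Boolean algebra. -/
def IsSubmeasure {α : Type*} [BooleanAlgebra α] (φ : α → ℝ) : Prop :=
  φ ⊥ = 0 ∧ Monotone φ ∧ ∀ a b : α, φ (a ⊔ b) ≤ φ a + φ b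

/-- A diffuse submeasure: the unit can be covered by finitely many elements of
arbitrarily small submeasure. -/
def IsDiffuse {α : Type*} [BooleanAlgebra α] (φ : α → ℝ) : Prop :=
  ∀ ε : ℝ, 0 < ε → ∃ ℬ : Finset α, ℬ.sup id = ⊤ ∧ ∀ B ∈ ℬ, φ B ≤ ε

/-- A (nonnegative, finitely additive) measure on a Boolean algebra. -/
def IsAddMeasure {α : Type*} [BooleanAlgebra α] (μ : α → ℝ) : Prop :=
  μ ⊥ = 0 ∧ (∀ a, 0 ≤ μ a) ∧ ∀ a b : α, Disjoint a b → μ (a ⊔ b) = μ a + μ b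

section Aux
variable {α : Type*} [BooleanAlgebra α]

lemma exists_meet_atomOf_ne_bot {m : ℕ} (C : Fin m → α) {a : α} (ha : a ≠ ⊥) :
    ∃ s : Fin m → Bool, a ⊓ atomOf C s ≠ ⊥ := by
  suffices h : ∀ F : Finset (Fin m), ∃ s : Fin m → Bool,
      a ⊓ F.inf (fun i => if s i then C i else (C i)ᶜ) ≠ ⊥ from h Finset.univ
  intro F
  induction F using Finset.induction with
  | empty => exact ⟨fun _ => true, by simpa using ha⟩
  | @insert j F hj ih =>
    obtain ⟨s, hs⟩ := ih
    have hsplit : (a ⊓ F.inf (fun i => if s i then C i else (C i)ᶜ)) =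
        ((a ⊓ F.inf (fun i => if s i then C i else (C i)ᶜ)) ⊓ C j) ⊔
        ((a ⊓ F.inf (fun i => if s i then C i else (C i)ᶜ)) ⊓ (C j)ᶜ) := by
      rw [← inf_sup_left, sup_compl_eq_top, inf_top_eq]
    have key : ∀ v : α, (a ⊓ F.inf (fun i => if s i then C i else (C i)ᶜ)) ⊓ v ≠ ⊥ →
        ∀ b : Bool, v = (if b then C j else (C j)ᶜ) →
        ∃ s' : Fin m → Bool,
          a ⊓ (insert j F).inf (fun i => if s' i then C i else (C i)ᶜ) ≠ ⊥ := by
      intro v hv b hb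
      refine ⟨Function.update s j b, ?_⟩
      have hFeq : F.inf (fun i => if Function.update s j b i then C i else (C i)ᶜ)
          = F.inf (fun i => if s i then C i else (C i)ᶜ) := by
        apply Finset.inf_congr rfl
        intro i hi
        rw [Function.update_of_ne (by rintro rfl; exact hj hi)]
      rw [Finset.inf_insert, hFeq, Function.update_self, ← hb, inf_left_comm, ← inf_assoc]
      intro h
      apply hv
      calc (a ⊓ F.inf fun i => if s i = true then C i else (C i)ᶜ) ⊓ v
          = v ⊓ a ⊓ F.inf fun i => if s i = true then C i else (C i)ᶜ := by ac_rfl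
        _ = ⊥ := h
    by_cases hb1 : (a ⊓ F.inf (fun i => if s i then C i else (C i)ᶜ)) ⊓ C j ≠ ⊥
    · exact key (C j) hb1 true rfl
    · push_neg at hb1
      refine key (C j)ᶜ ?_ false rfl
      intro h
      exact hs (by rw [hsplit, hb1, h, sup_idem])

lemma covMult_bddAbove (htb : (⊤:α) ≠ ⊥) {m : ℕ} (C : Fin m → α) :
    BddAbove {k : ℕ | ∀ s : Fin m → Bool, atomOf C s ≠ ⊥ →
      k ≤ (Finset.univ.filter (fun i => s i = true)).card} := by
  obtain ⟨s0, hs0⟩ := exists_meet_atomOf_ne_bot C (a := ⊤) htb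
  rw [top_inf_eq] at hs0
  exact ⟨_, fun k hk => hk s0 hs0⟩

lemma covMult_spec (htb : (⊤:α) ≠ ⊥) {m : ℕ} (C : Fin m → α) :
    (∀ s : Fin m → Bool, atomOf C s ≠ ⊥ →
      covMult C ≤ (Finset.univ.filter (fun i => s i = true)).card) ∧ covMult C ≤ m := by
  obtain ⟨s0, hs0⟩ := exists_meet_atomOf_ne_bot C (a := ⊤) htb
  rw [top_inf_eq] at hs0
  have hbdd := covMult_bddAbove htb C
  have hmem : covMult C ∈ {k : ℕ | ∀ s : Fin m → Bool, atomOf C s ≠ ⊥ →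
      k ≤ (Finset.univ.filter (fun i => s i = true)).card} :=
    Nat.sSup_mem ⟨0, fun s _ => Nat.zero_le _⟩ hbdd
  refine ⟨hmem, (hmem s0 hs0).trans ((Finset.card_filter_le _ _).trans (by simp))⟩

end Aux

section Aux2
variable {α : Type*} [BooleanAlgebra α]

def covSet (ℬ : Set α) : Set ℝ :=
  { r : ℝ | ∃ n : ℕ, 0 < n ∧ ∃ C : Fin n → α, (∀ i, C i ∈ ℬ) ∧ r = (covMult C : ℝ) / n }

lemma covNumber_eq (ℬ : Set α) : covNumber ℬ = sSup (covSet ℬ) := rfl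

lemma zero_mem_covSet (htb : (⊤:α) ≠ ⊥) {ℬ : Set α} (hb : ⊥ ∈ ℬ) : (0:ℝ) ∈ covSet ℬ := by
  refine ⟨1, one_pos, fun _ => ⊥, fun _ => hb, ?_⟩
  have h0 : covMult (fun _ : Fin 1 => (⊥:α)) = 0 := by
    have := (covMult_spec htb (fun _ : Fin 1 => (⊥:α))).1 (fun _ => false)
      (by simpa [atomOf] using htb)
    simpa using this
  rw [h0]; simp

lemma covSet_subset_Icc (htb : (⊤:α) ≠ ⊥) (ℬ : Set α) :
    covSet ℬ ⊆ Set.Icc (0:ℝ) 1 := by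
  rintro r ⟨n, hn, C, hC, rfl⟩
  constructor
  · positivity
  · rw [div_le_one (by exact_mod_cast hn)]
    exact_mod_cast (covMult_spec htb C).2

lemma bddAbove_covSet (htb : (⊤:α) ≠ ⊥) (ℬ : Set α) : BddAbove (covSet ℬ) :=
  ⟨1, fun r hr => (covSet_subset_Icc htb ℬ hr).2⟩

lemma covNumber_nonneg (htb : (⊤:α) ≠ ⊥) {ℬ : Set α} (hb : ⊥ ∈ ℬ) :
    0 ≤ covNumber ℬ := by
  rw [covNumber_eq]
  exact le_csSup (bddAbove_covSet htb ℬ) (zero_mem_covSet htb hb)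

lemma covNumber_le_one (htb : (⊤:α) ≠ ⊥) {ℬ : Set α} (hb : ⊥ ∈ ℬ) :
    covNumber ℬ ≤ 1 := by
  rw [covNumber_eq]
  exact csSup_le ⟨0, zero_mem_covSet htb hb⟩ (fun r hr => (covSet_subset_Icc htb ℬ hr).2)

lemma covNumber_mono (htb : (⊤:α) ≠ ⊥) {ℬ ℬ' : Set α} (hb : ⊥ ∈ ℬ) (h : ℬ ⊆ ℬ') :
    covNumber ℬ ≤ covNumber ℬ' := by
  rw [covNumber_eq, covNumber_eq]
  refine csSup_le_csSup (bddAbove_covSet htb ℬ') ⟨0, zero_mem_covSet htb hb⟩ ?_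
  rintro r ⟨n, hn, C, hC, rfl⟩
  exact ⟨n, hn, C, fun i => h (hC i), rfl⟩

end Aux2

section Key
variable {α : Type*} [BooleanAlgebra α]

lemma key_step {φ : α → ℝ} (hφ : IsSubmeasure φ) (htb : (⊤:α) ≠ ⊥) {ξ ζ : ℝ}
    {m n : ℕ} (hm : 0 < m) (hn : 0 < n) (C : Fin m → α) (D : Fin n → α)
    (hC : ∀ i, φ (C i) ≤ ξ) (hD : ∀ j, φ (D j) ≤ ζ) :
    (covMult C : ℝ)/m + (covMult D : ℝ)/n - ((covMult C : ℝ)/m) * ((covMult D : ℝ)/n)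
      ≤ covNumber {A : α | φ A ≤ ξ + ζ} := by
  classical
  set k := covMult C with hk
  set l := covMult D with hl
  set E : Fin (m*n) → α :=
    fun p => C (finProdFinEquiv.symm p).1 ⊔ D (finProdFinEquiv.symm p).2 with hE
  -- covMult C ≤ m etc.
  have hkm : k ≤ m := (covMult_spec htb C).2
  have hln : l ≤ n := (covMult_spec htb D).2
  -- the combinatorial claim
  have hcomb : ∀ s : Fin (m*n) → Bool, atomOf E s ≠ ⊥ →
      k * n + m * l ≤ (Finset.univ.filter (fun p => s p = true)).card + k * l := by
    intro s ha
    obtain ⟨t, h1⟩ := exists_meet_atomOf_ne_bot C ha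
    obtain ⟨u, h2⟩ := exists_meet_atomOf_ne_bot D h1
    have hCt : atomOf C t ≠ ⊥ := fun h => h1 (by rw [h, inf_bot_eq])
    have hDu : atomOf D u ≠ ⊥ := fun h => h2 (by rw [h, inf_bot_eq])
    have hble : ∀ p : Fin (m*n),
        atomOf E s ⊓ atomOf C t ⊓ atomOf D u ≤
          (if s p then E p else (E p)ᶜ) := fun p =>
      le_trans (le_trans inf_le_left inf_le_left) (Finset.inf_le (Finset.mem_univ p))
    have hbleC : ∀ i : Fin m,
        atomOf E s ⊓ atomOf C t ⊓ atomOf D u ≤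
          (if t i then C i else (C i)ᶜ) := fun i =>
      le_trans (le_trans inf_le_left inf_le_right) (Finset.inf_le (Finset.mem_univ i))
    have hbleD : ∀ j : Fin n,
        atomOf E s ⊓ atomOf C t ⊓ atomOf D u ≤
          (if u j then D j else (D j)ᶜ) := fun j =>
      le_trans inf_le_right (Finset.inf_le (Finset.mem_univ j))
    -- pointwise identification of s
    have hsp : ∀ p : Fin (m*n),
        s p = (t (finProdFinEquiv.symm p).1 || u (finProdFinEquiv.symm p).2) := by
      intro p
      set i := (finProdFinEquiv.symm p).1
      set j := (finProdFinEquiv.symm p).2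
      have hEp : E p = C i ⊔ D j := rfl
      have hbot : ¬ (atomOf E s ⊓ atomOf C t ⊓ atomOf D u ≤ E p ∧
          atomOf E s ⊓ atomOf C t ⊓ atomOf D u ≤ (E p)ᶜ) := by
        rintro ⟨hx, hy⟩
        exact h2 (le_bot_iff.mp ((le_inf hx hy).trans_eq inf_compl_eq_bot))
      cases hsb : s p with
      | true =>
        have hs1 : atomOf E s ⊓ atomOf C t ⊓ atomOf D u ≤ E p := by
          have := hble p; rwa [hsb, if_pos rfl] at this
        cases ht : t i with
        | true => simp [ht]
        | false =>
          cases hu : u j with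
          | true => simp [hu]
          | false =>
            exfalso
            apply hbot
            refine ⟨hs1, ?_⟩
            have h3 := hbleC i; rw [ht] at h3; simp only [if_neg Bool.false_ne_true] at h3
            have h4 := hbleD j; rw [hu] at h4; simp only [if_neg Bool.false_ne_true] at h4
            rw [hEp, compl_sup]
            exact le_inf h3 h4
      | false =>
        have hs1 : atomOf E s ⊓ atomOf C t ⊓ atomOf D u ≤ (E p)ᶜ := by
          have := hble p; rwa [hsb, if_neg Bool.false_ne_true] at this
        cases ht : t i with
        | true =>
          exfalso
          apply hbot
          refine ⟨?_, hs1⟩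
          have h3 := hbleC i; rw [ht, if_pos rfl] at h3
          exact le_trans h3 (by rw [hEp]; exact le_sup_left)
        | false =>
          cases hu : u j with
          | true =>
            exfalso
            apply hbot
            refine ⟨?_, hs1⟩
            have h4 := hbleD j; rw [hu, if_pos rfl] at h4
            exact le_trans h4 (by rw [hEp]; exact le_sup_right)
          | false => simp [ht, hu]
    -- counting
    set a := (Finset.univ.filter (fun i => t i = true)).card with haa
    set b := (Finset.univ.filter (fun j => u j = true)).card with hbb
    have hka : k ≤ a := (covMult_spec htb C).1 t hCt
    have hlb : l ≤ b := (covMult_spec htb D).1 u hDu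
    have ham : a ≤ m := le_trans (Finset.card_filter_le _ _) (by simp)
    have hbn : b ≤ n := le_trans (Finset.card_filter_le _ _) (by simp)
    have hcard1 : (Finset.univ.filter (fun p => s p = true)).card =
        (Finset.univ.filter (fun q : Fin m × Fin n => (t q.1 || u q.2) = true)).card := by
      refine Finset.card_equiv finProdFinEquiv.symm ?_
      intro p
      simp only [Finset.mem_filter, Finset.mem_univ, true_and]
      rw [hsp p]
    have hcard2 : (Finset.univ.filter
        (fun q : Fin m × Fin n => (t q.1 || u q.2) = true)).card + (m - a) * (n - b) = m * n := by
      have hneg : (Finset.univ.filter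
          (fun q : Fin m × Fin n => ¬ ((t q.1 || u q.2) = true))) =
          (Finset.univ.filter (fun i => ¬ (t i = true))) ×ˢ
            (Finset.univ.filter (fun j => ¬ (u j = true))) := by
        ext q
        simp [Finset.mem_product]
      have h5 := Finset.card_filter_add_card_filter_not
        (s := (Finset.univ : Finset (Fin m × Fin n)))
        (p := fun q => (t q.1 || u q.2) = true)
      rw [hneg, Finset.card_product] at h5
      have h6 : (Finset.univ.filter (fun i : Fin m => ¬ (t i = true))).card = m - a := by
        have := Finset.card_filter_add_card_filter_not
          (s := (Finset.univ : Finset (Fin m))) (p := fun i => t i = true)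
        simp only [Finset.card_univ, Fintype.card_fin] at this
        omega
      have h7 : (Finset.univ.filter (fun j : Fin n => ¬ (u j = true))).card = n - b := by
        have := Finset.card_filter_add_card_filter_not
          (s := (Finset.univ : Finset (Fin n))) (p := fun j => u j = true)
        simp only [Finset.card_univ, Fintype.card_fin] at this
        omega
      rw [h6, h7] at h5
      simpa using h5
    rw [hcard1]
    -- now pure arithmetic
    zify [ham, hbn] at hcard2
    zify at hka hlb ham hbn hkm hln ⊢
    have hmul : ((m:ℤ) - a) * ((n:ℤ) - b) ≤ ((m:ℤ) - k) * ((n:ℤ) - l) :=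
      mul_le_mul (by omega) (by omega) (by omega) (by omega)
    nlinarith [hcard2, hmul]
  -- conclude
  have hsub : k*l ≤ k*n + m*l := le_trans (Nat.mul_le_mul_right l hkm) (Nat.le_add_left _ _)
  have hKle : k*n + m*l - k*l ≤ covMult E := by
    refine le_csSup (covMult_bddAbove htb E) ?_
    intro s hs
    have := hcomb s hs
    omega
  have hmn : 0 < m*n := Nat.mul_pos hm hn
  have hle1 : (covMult E : ℝ) / ((m*n : ℕ) : ℝ) ≤ covNumber {A : α | φ A ≤ ξ + ζ} := by
    rw [covNumber_eq]
    refine le_csSup (bddAbove_covSet htb _) ?_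
    exact ⟨m*n, hmn, E, fun p => le_trans (hφ.2.2 _ _) (add_le_add (hC _) (hD _)), rfl⟩
  refine le_trans ?_ hle1
  have hcast : ((k*n + m*l - k*l : ℕ) : ℝ) ≤ (covMult E : ℝ) := Nat.cast_le.mpr hKle
  have hmR : (0:ℝ) < m := by exact_mod_cast hm
  have hnR : (0:ℝ) < n := by exact_mod_cast hn
  calc (covMult C : ℝ)/m + (covMult D : ℝ)/n - ((covMult C : ℝ)/m) * ((covMult D : ℝ)/n)
      = ((k*n + m*l - k*l : ℕ) : ℝ) / ((m*n : ℕ) : ℝ) := by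
        push_cast [hsub]
        field_simp
        ring
    _ ≤ (covMult E : ℝ) / ((m*n : ℕ) : ℝ) := by
        gcongr

end Key


section More
variable {α : Type*} [BooleanAlgebra α]

lemma covNumber_superadd {φ : α → ℝ} (hφ : IsSubmeasure φ) (htb : (⊤:α) ≠ ⊥)
    {ξ ζ : ℝ} (hξ : 0 < ξ) (hζ : 0 < ζ) :
    covNumber {A : α | φ A ≤ ξ} + covNumber {A : α | φ A ≤ ζ}
      - covNumber {A : α | φ A ≤ ξ} * covNumber {A : α | φ A ≤ ζ}
      ≤ covNumber {A : α | φ A ≤ ξ + ζ} := by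
  have hb1 : (⊥:α) ∈ {A : α | φ A ≤ ξ} := by
    simp only [Set.mem_setOf_eq, hφ.1]; linarith
  have hb2 : (⊥:α) ∈ {A : α | φ A ≤ ζ} := by
    simp only [Set.mem_setOf_eq, hφ.1]; linarith
  set c1 := covNumber {A : α | φ A ≤ ξ} with hc1
  set c2 := covNumber {A : α | φ A ≤ ζ} with hc2
  have h1le : c1 ≤ 1 := covNumber_le_one htb hb1
  have h2le : c2 ≤ 1 := covNumber_le_one htb hb2
  refine le_of_forall_pos_le_add (fun ε hε => ?_)
  have hlt1 : c1 - ε/2 < sSup (covSet {A : α | φ A ≤ ξ}) := by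
    rw [← covNumber_eq]; linarith
  have hlt2 : c2 - ε/2 < sSup (covSet {A : α | φ A ≤ ζ}) := by
    rw [← covNumber_eq]; linarith
  obtain ⟨r, hrmem, hr⟩ := exists_lt_of_lt_csSup ⟨0, zero_mem_covSet htb hb1⟩ hlt1
  obtain ⟨r', hrmem', hr'⟩ := exists_lt_of_lt_csSup ⟨0, zero_mem_covSet htb hb2⟩ hlt2
  have hrle : r ≤ c1 := le_csSup (bddAbove_covSet htb _) hrmem
  have hrle' : r' ≤ c2 := le_csSup (bddAbove_covSet htb _) hrmem'
  have hricc := covSet_subset_Icc htb _ hrmem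
  have hricc' := covSet_subset_Icc htb _ hrmem'
  obtain ⟨m, hm, C, hC, rfl⟩ := hrmem
  obtain ⟨n, hn, D, hD, rfl⟩ := hrmem'
  have hkey := key_step hφ htb hm hn C D (fun i => hC i) (fun j => hD j)
  have h2 : c1 + c2 - c1 * c2 - ((covMult C : ℝ)/m + (covMult D : ℝ)/n
      - ((covMult C : ℝ)/m) * ((covMult D : ℝ)/n)) ≤ ε := by
    nlinarith [hricc.1, hricc'.1, hricc.2, hricc'.2]
  linarith

lemma covMult_eq_zero_of_degenerate (htb : (⊤:α) = ⊥) {n : ℕ} (C : Fin n → α) :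
    covMult C = 0 := by
  have hset : {k : ℕ | ∀ s : Fin n → Bool, atomOf C s ≠ ⊥ →
      k ≤ (Finset.univ.filter (fun i => s i = true)).card} = Set.univ := by
    refine Set.eq_univ_iff_forall.mpr (fun k s hs => absurd (le_bot_iff.mp ?_) hs)
    exact htb ▸ le_top
  have hnb : ¬ BddAbove (Set.univ : Set ℕ) := by
    rintro ⟨b, hb⟩
    exact absurd (hb (Set.mem_univ (b+1))) (by omega)
  rw [covMult, hset, csSup_of_not_bddAbove hnb, csSup_empty]
  rfl

lemma covNumber_degenerate (htb : (⊤:α) = ⊥) {ℬ : Set α} (hb : ⊥ ∈ ℬ) :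
    covNumber ℬ = 0 := by
  have hS : covSet ℬ = {0} := by
    ext r
    constructor
    · rintro ⟨n, hn, C, hC, rfl⟩
      simp [covMult_eq_zero_of_degenerate htb]
    · intro hr
      rw [Set.mem_singleton_iff] at hr
      subst hr
      exact ⟨1, one_pos, fun _ => ⊥, fun _ => hb,
        by simp [covMult_eq_zero_of_degenerate htb]⟩
  rw [covNumber_eq, hS, csSup_singleton]

end More

set_option maxHeartbeats 2000000 in
/-- For a diffuse submeasure with bounded `h_φ` (i.e. neither hyperbolic nor elliptic,
in the parabolic case), `f(ξ) = ξ·h_φ(ξ)` is almost superadditive and `h_φ` has a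
finite limit at `0⁺`. -/
theorem parabolic_hphi_limit {α : Type*} [BooleanAlgebra α] (φ : α → ℝ)
    (hφ : IsSubmeasure φ) (hd : IsDiffuse φ)
    (M : ℝ) (hM : ∀ ξ : ℝ, 0 < ξ → hphi φ ξ ≤ M) :
    (∀ ξ : ℝ, 0 < ξ → ∀ ζ : ℝ, 0 < ζ →
        ξ * hphi φ ξ + ζ * hphi φ ζ - (ξ * hphi φ ξ) * (ζ * hphi φ ζ) ≤
          (ξ + ζ) * hphi φ (ξ + ζ)) ∧
      ∃ L : ℝ, Filter.Tendsto (fun ξ => hphi φ ξ) (nhdsWithin 0 (Set.Ioi 0)) (nhds L) := by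
  by_cases htb : (⊤:α) = ⊥
  · -- degenerate Boolean algebra
    have h0 : ∀ ξ : ℝ, 0 < ξ → hphi φ ξ = 0 := by
      intro ξ hξ
      unfold hphi
      rw [covNumber_degenerate htb
        (show (⊥:α) ∈ {A : α | φ A ≤ ξ} by simp only [Set.mem_setOf_eq, hφ.1]; linarith),
        zero_div]
    constructor
    · intro ξ hξ ζ hζ
      rw [h0 ξ hξ, h0 ζ hζ, h0 (ξ+ζ) (by linarith)]
      norm_num
    · refine ⟨0, ?_⟩
      refine Filter.Tendsto.congr' ?_ tendsto_const_nhds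
      filter_upwards [self_mem_nhdsWithin] with ξ hξ
      exact (h0 ξ hξ).symm
  · -- main case
    set c : ℝ → ℝ := fun ξ => covNumber {A : α | φ A ≤ ξ} with hc
    have hbm : ∀ ξ : ℝ, 0 < ξ → (⊥:α) ∈ {A : α | φ A ≤ ξ} := fun ξ hξ => by
      simp only [Set.mem_setOf_eq, hφ.1]; linarith
    have hphi_eq : ∀ ξ : ℝ, hphi φ ξ = c ξ / ξ := fun ξ => rfl
    have hc0 : ∀ ξ : ℝ, 0 < ξ → 0 ≤ c ξ := fun ξ hξ => covNumber_nonneg htb (hbm ξ hξ)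
    have hc1 : ∀ ξ : ℝ, 0 < ξ → c ξ ≤ 1 := fun ξ hξ => covNumber_le_one htb (hbm ξ hξ)
    have hmono : ∀ ξ ζ : ℝ, 0 < ξ → ξ ≤ ζ → c ξ ≤ c ζ := fun ξ ζ hξ hle =>
      covNumber_mono htb (hbm ξ hξ) (fun A hA => le_trans hA hle)
    have hsuper : ∀ ξ ζ : ℝ, 0 < ξ → 0 < ζ → c ξ + c ζ - c ξ * c ζ ≤ c (ξ + ζ) :=
      fun ξ ζ hξ hζ => covNumber_superadd hφ htb hξ hζ
    have hxh : ∀ x : ℝ, 0 < x → x * hphi φ x = c x := by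
      intro x hx
      rw [hphi_eq]
      field_simp
    refine ⟨fun ξ hξ ζ hζ => by
      rw [hxh ξ hξ, hxh ζ hζ, hxh (ξ+ζ) (by linarith)]
      exact hsuper ξ ζ hξ hζ, ?_⟩
    clear_value c
    -- the limit part
    set M' : ℝ := max M 1 with hM'
    have hM'pos : (0:ℝ) < M' := lt_of_lt_of_le one_pos (le_max_right _ _)
    have hcM : ∀ ξ : ℝ, 0 < ξ → c ξ ≤ M' * ξ := by
      intro ξ hξ
      have h := hM ξ hξ
      rw [hphi_eq, div_le_iff₀ hξ] at h
      calc c ξ ≤ M * ξ := h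
        _ ≤ M' * ξ := by nlinarith [le_max_left M 1]
    clear_value M'
    set δ : ℝ := 1/(2*M') with hδdef
    have hδpos : 0 < δ := by positivity
    clear_value δ
    have hchalf : ∀ ξ : ℝ, ξ ∈ Set.Ioo 0 δ → c ξ ≤ 1/2 := by
      rintro ξ ⟨h1, h2⟩
      calc c ξ ≤ M' * ξ := hcM ξ h1
        _ ≤ M' * δ := by nlinarith
        _ = 1/2 := by rw [hδdef]; field_simp
    set ψ : ℝ → ℝ := fun ξ => -Real.log (1 - c ξ) with hψdef
    have hψlb : ∀ ξ ∈ Set.Ioo 0 δ, c ξ ≤ ψ ξ := by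
      intro ξ hξ
      have h1 : (0:ℝ) < 1 - c ξ := by have := hchalf ξ hξ; linarith
      have h2 := Real.log_le_sub_one_of_pos h1
      simp only [hψdef]; linarith
    have hψub : ∀ ξ ∈ Set.Ioo 0 δ, ψ ξ ≤ c ξ + 2*(c ξ)^2 := by
      intro ξ hξ
      have hch := hchalf ξ hξ
      have hc0' := hc0 ξ hξ.1
      have h1 : (0:ℝ) < 1 - c ξ := by linarith
      have h2 := Real.one_sub_inv_le_log_of_pos h1
      have h3 : (1 - c ξ)⁻¹ ≤ 1 + c ξ + 2*(c ξ)^2 := by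
        rw [inv_eq_one_div, div_le_iff₀ h1]
        nlinarith
      simp only [hψdef]; linarith
    have hψsuper : ∀ ξ ζ : ℝ, 0 < ξ → 0 < ζ → ξ + ζ < δ → ψ ξ + ψ ζ ≤ ψ (ξ + ζ) := by
      intro ξ ζ hξ hζ hsum
      have h1 : (0:ℝ) < 1 - c ξ := by have := hchalf ξ ⟨hξ, by linarith⟩; linarith
      have h2 : (0:ℝ) < 1 - c ζ := by have := hchalf ζ ⟨hζ, by linarith⟩; linarith
      have h3 : (0:ℝ) < 1 - c (ξ+ζ) := by
        have := hchalf (ξ+ζ) ⟨by linarith, hsum⟩; linarith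
      have h4 : 1 - c (ξ+ζ) ≤ (1 - c ξ) * (1 - c ζ) := by nlinarith [hsuper ξ ζ hξ hζ]
      have h5 := Real.log_le_log h3 h4
      rw [Real.log_mul (ne_of_gt h1) (ne_of_gt h2)] at h5
      simp only [hψdef]; linarith
    have hψmono : ∀ ξ ζ : ℝ, 0 < ξ → ξ ≤ ζ → ζ < δ → ψ ξ ≤ ψ ζ := by
      intro ξ ζ hξ hle hζδ
      have h2 : (0:ℝ) < 1 - c ζ := by
        have := hchalf ζ ⟨lt_of_lt_of_le hξ hle, hζδ⟩; linarith
      have h3 := Real.log_le_log h2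
        (show 1 - c ζ ≤ 1 - c ξ by have := hmono ξ ζ hξ hle; linarith)
      simp only [hψdef]; linarith
    have hψ0 : ∀ ξ ∈ Set.Ioo 0 δ, 0 ≤ ψ ξ := fun ξ hξ =>
      le_trans (hc0 ξ hξ.1) (hψlb ξ hξ)
    clear_value ψ
    have hψiter : ∀ (n : ℕ) (ξ : ℝ), 0 < ξ → 1 ≤ n → (n:ℝ)*ξ < δ →
        (n:ℝ) * ψ ξ ≤ ψ ((n:ℝ)*ξ) := by
      intro n
      induction n with
      | zero => intro ξ _ h _; omega
      | succ n ih =>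
        intro ξ hξ _ hlt
        rcases Nat.eq_zero_or_pos n with hn0 | hn1
        · subst hn0; norm_num
        · have hnR : (1:ℝ) ≤ (n:ℝ) := by exact_mod_cast hn1
          have hcast : ((n+1:ℕ):ℝ)*ξ = (n:ℝ)*ξ + ξ := by push_cast; ring
          rw [hcast] at hlt ⊢
          have hnlt : (n:ℝ)*ξ < δ := by nlinarith
          have hih := ih ξ hξ hn1 hnlt
          have hsup := hψsuper ((n:ℝ)*ξ) ξ (by nlinarith) hξ hlt
          push_cast
          nlinarith
    have hF : ∀ ξ ζ0 : ℝ, ξ ∈ Set.Ioo 0 δ → ζ0 ∈ Set.Ioo 0 δ → ξ < ζ0 →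
        ψ ξ / ξ ≤ ψ ζ0 / (ζ0 - ξ) := by
      intro ξ ζ0 hξ hζ0 hlt
      have hξ0 := hξ.1
      set n := ⌊ζ0/ξ⌋₊ with hn
      have hn1 : 1 ≤ n := Nat.le_floor (by rw [Nat.cast_one, le_div_iff₀ hξ0]; linarith)
      have hnR : (1:ℝ) ≤ (n:ℝ) := by exact_mod_cast hn1
      have hnle : (n:ℝ)*ξ ≤ ζ0 := by
        have h := Nat.floor_le (le_of_lt (div_pos hζ0.1 hξ0))
        rw [← hn] at h
        calc (n:ℝ)*ξ ≤ (ζ0/ξ)*ξ := by nlinarith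
          _ = ζ0 := by field_simp
      have hlt2 : ζ0 - ξ < (n:ℝ)*ξ := by
        have h := Nat.lt_floor_add_one (ζ0/ξ)
        rw [← hn] at h
        have h' : ζ0 < ((n:ℝ) + 1) * ξ := by
          rw [div_lt_iff₀ hξ0] at h; linarith [h]
        nlinarith
      have hnξδ : (n:ℝ)*ξ < δ := lt_of_le_of_lt hnle hζ0.2
      have h1 := hψiter n ξ hξ0 hn1 hnξδ
      have h2 := hψmono ((n:ℝ)*ξ) ζ0 (by nlinarith) hnle hζ0.2
      have hψξ0 := hψ0 ξ hξ
      have hζξpos : (0:ℝ) < ζ0 - ξ := by linarith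
      rw [div_le_div_iff₀ hξ0 hζξpos]
      nlinarith [mul_le_mul_of_nonneg_right h1 hξ0.le,
        mul_le_mul_of_nonneg_right h2 hξ0.le,
        mul_le_mul_of_nonneg_left hlt2.le hψξ0]
    obtain ⟨I, hIle, hI0, hexists⟩ : ∃ I : ℝ, (∀ ξ ∈ Set.Ioo 0 δ, I ≤ ψ ξ / ξ) ∧ 0 ≤ I ∧
        ∀ ε : ℝ, 0 < ε → ∃ ζ0 ∈ Set.Ioo 0 δ, ψ ζ0 / ζ0 < I + ε := by
      set Q : Set ℝ := (fun ξ => ψ ξ / ξ) '' (Set.Ioo 0 δ) with hQ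
      have hQne : Q.Nonempty := ⟨ψ (δ/2) / (δ/2), ⟨δ/2, ⟨by positivity, by linarith⟩, rfl⟩⟩
      have hQbdd : BddBelow Q := by
        refine ⟨0, ?_⟩
        rintro q ⟨ξ, hξ, rfl⟩
        exact div_nonneg (hψ0 ξ hξ) hξ.1.le
      refine ⟨sInf Q, fun ξ hξ => csInf_le hQbdd ⟨ξ, hξ, rfl⟩, ?_, ?_⟩
      · refine le_csInf hQne ?_
        rintro q ⟨ξ, hξ, rfl⟩
        exact div_nonneg (hψ0 ξ hξ) hξ.1.le
      · intro ε hε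
        obtain ⟨q, ⟨ζ0, hζ0, rfl⟩, hq⟩ := exists_lt_of_csInf_lt hQne
          (show sInf Q < sInf Q + ε by linarith)
        exact ⟨ζ0, hζ0, hq⟩
    have hψM : ∀ ξ ∈ Set.Ioo 0 δ, ψ ξ ≤ 2*M'*ξ := by
      intro ξ hξ
      have h1 := hψub ξ hξ
      have h2 := hchalf ξ hξ
      have h3 := hcM ξ hξ.1
      have h4 := hc0 ξ hξ.1
      nlinarith
    have htψ : Filter.Tendsto (fun ξ => ψ ξ / ξ) (nhdsWithin 0 (Set.Ioi 0)) (nhds I) := by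
      rw [Metric.tendsto_nhdsWithin_nhds]
      intro ε hε
      obtain ⟨ζ0, hζ0, hq⟩ := hexists (ε/2) (by linarith)
      have hζ0p := hζ0.1
      have hIM : I ≤ 2*M' := by
        refine le_trans (hIle ζ0 hζ0) ?_
        rw [div_le_iff₀ hζ0p]
        linarith [hψM ζ0 hζ0]
      refine ⟨min (min (ζ0/2) (ε*ζ0/(2*(2*M'+ε)))) δ, by positivity, ?_⟩
      intro ξ hξmem hdist
      rw [Real.dist_eq, sub_zero] at hdist
      have hξpos : (0:ℝ) < ξ := hξmem
      have hξabs : ξ < min (min (ζ0/2) (ε*ζ0/(2*(2*M'+ε)))) δ := by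
        rwa [abs_of_pos hξpos] at hdist
      have hξδ : ξ < δ := lt_of_lt_of_le hξabs (min_le_right _ _)
      have hξζ2 : ξ < ζ0/2 :=
        lt_of_lt_of_le hξabs ((min_le_left _ _).trans (min_le_left _ _))
      have hξε : ξ < ε*ζ0/(2*(2*M'+ε)) :=
        lt_of_lt_of_le hξabs ((min_le_left _ _).trans (min_le_right _ _))
      have hξIoo : ξ ∈ Set.Ioo 0 δ := ⟨hξpos, hξδ⟩
      have hlow : I ≤ ψ ξ / ξ := hIle ξ hξIoo
      have hup : ψ ξ / ξ ≤ ψ ζ0 / (ζ0 - ξ) := hF ξ ζ0 hξIoo hζ0 (by linarith)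
      have hupper2 : ψ ζ0 / (ζ0 - ξ) < I + ε := by
        rw [div_lt_iff₀ (show (0:ℝ) < ζ0 - ξ by linarith)]
        have hq' : ψ ζ0 < (I + ε/2) * ζ0 := by
          rw [div_lt_iff₀ hζ0p] at hq; exact hq
        have hstep : (I + ε) * ξ ≤ ε * ζ0 / 2 := by
          have hB : (0:ℝ) < 2*M' + ε := by linarith
          have h1 : (I + ε) * ξ ≤ (2*M' + ε) * ξ := by nlinarith [hIM, hξpos.le]
          have h2 : (2*M' + ε) * ξ ≤ ε * ζ0 / 2 := by
            have h3 := mul_le_mul_of_nonneg_left hξε.le hB.le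
            have heq : (2*M'+ε) * (ε*ζ0/(2*(2*M'+ε))) = ε*ζ0/2 := by
              field_simp
            rw [heq] at h3
            linarith
          linarith
        nlinarith [hq', hstep]
      rw [Real.dist_eq, abs_lt]
      constructor
      · linarith [hup, hupper2]
      · linarith [hup, hupper2]
    have hdiff0 : ∀ᶠ ξ in nhdsWithin 0 (Set.Ioi 0), 0 ≤ ψ ξ/ξ - c ξ/ξ := by
      filter_upwards [Ioo_mem_nhdsGT_of_mem (Set.left_mem_Ico.mpr hδpos)] with ξ hξ
      have h1 := hψlb ξ hξ
      have hξp := hξ.1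
      have h2 := (div_le_div_iff_of_pos_right hξp).mpr h1
      linarith
    have hdiffub : ∀ᶠ ξ in nhdsWithin 0 (Set.Ioi 0), ψ ξ/ξ - c ξ/ξ ≤ 2*M'^2*ξ := by
      filter_upwards [Ioo_mem_nhdsGT_of_mem (Set.left_mem_Ico.mpr hδpos)] with ξ hξ
      have h1 := hψub ξ hξ
      have h3 := hcM ξ hξ.1
      have h4 := hc0 ξ hξ.1
      have hξp := hξ.1
      rw [div_sub_div_same, div_le_iff₀ hξp]
      nlinarith [mul_le_mul h3 h3 h4 (le_trans h4 h3)]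
    have htd : Filter.Tendsto (fun ξ => ψ ξ/ξ - c ξ/ξ) (nhdsWithin 0 (Set.Ioi 0)) (nhds 0) := by
      apply squeeze_zero' hdiff0 hdiffub
      have h5 : Filter.Tendsto (fun ξ : ℝ => 2*M'^2*ξ) (nhds 0) (nhds 0) := by
        have h6 : Filter.Tendsto (fun ξ : ℝ => ξ) (nhds 0) (nhds 0) := Filter.tendsto_id
        simpa using h6.const_mul (2*M'^2)
      exact tendsto_nhdsWithin_of_tendsto_nhds h5
    refine ⟨I, ?_⟩
    have hfin : Filter.Tendsto (fun ξ => ψ ξ/ξ - (ψ ξ/ξ - c ξ/ξ))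
        (nhdsWithin 0 (Set.Ioi 0)) (nhds (I - 0)) := htψ.sub htd
    rw [sub_zero] at hfin
    refine Filter.Tendsto.congr (fun ξ => ?_) hfin
    rw [hphi_eq]
    ring
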